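/- Let φ : ∂Ω₁ → ∂Ω₂ be the map defined by φ(x,y) = (x,y) if (x,y) ∈ ∂Ω₁ ∩ ∂((−1,1)²), and φ(x,y) = (2−x, y) otherwise. For every t ∈ (0,1) and every L ≥ 0, if h : Ω̄₁ → ℝ² satisfies h(Ω̄₁) ⊆ Ω̄₂, h = φ on ∂Ω₁, and |h(x) − h(y)| ≤ L|x − y| for all x, y ∈ Ω̄₁, then L ≥ √(1 + t²)/t. In particular, φ admits no Lipschitz extension h : Ω̄₁ → Ω̄₂. -/
import Mathlib


open Set Metric

/-- A point of the plane with given coordinates. -/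
noncomputable def mk2 (x y : ℝ) : EuclideanSpace ℝ (Fin 2) :=
  (WithLp.equiv 2 (Fin 2 → ℝ)).symm ![x, y]

/-- The open square `(-1, 1)²`. -/
def SquareSet : Set (EuclideanSpace ℝ (Fin 2)) :=
  {z | z 0 ∈ Set.Ioo (-1:ℝ) 1 ∧ z 1 ∈ Set.Ioo (-1:ℝ) 1}

/-- `Ω₁`: the square with an outward cusp attached. -/
def Omega1 : Set (EuclideanSpace ℝ (Fin 2)) :=
  SquareSet ∪ {z | 1 ≤ z 0 ∧ z 0 < 2 ∧ |z 1| < (2 - z 0) ^ 2}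

/-- `Ω₂`: the square with a closed inward cusp removed. -/
def Omega2 : Set (EuclideanSpace ℝ (Fin 2)) :=
  SquareSet \ {z | 0 ≤ z 0 ∧ z 0 ≤ 1 ∧ |z 1| ≤ (z 0) ^ 2}

open Classical in
/-- The boundary map: identity on `∂Ω₁ ∩ ∂((-1,1)²)`, reflection `x ↦ 2 - x` elsewhere. -/
noncomputable def phiMap (z : EuclideanSpace ℝ (Fin 2)) : EuclideanSpace ℝ (Fin 2) :=
  if z ∈ frontier Omega1 ∩ frontier SquareSet then z else mk2 (2 - z 0) (z 1)

lemma mk2_zero (x y : ℝ) : mk2 x y 0 = x := rfl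
lemma mk2_one (x y : ℝ) : mk2 x y 1 = y := rfl
lemma dist_mk2 (a b c d : ℝ) :
    dist (mk2 a b) (mk2 c d) = Real.sqrt ((a - c) ^ 2 + (b - d) ^ 2) := by
  rw [EuclideanSpace.dist_eq, Fin.sum_univ_two]
  simp [mk2_zero, mk2_one, Real.dist_eq, sq_abs]
lemma coord_le_dist (z w : EuclideanSpace ℝ (Fin 2)) (i : Fin 2) :
    |z i - w i| ≤ dist z w := by
  rw [EuclideanSpace.dist_eq, ← Real.sqrt_sq_eq_abs]
  apply Real.sqrt_le_sqrt
  have h : dist (z i) (w i) ^ 2 = (z i - w i) ^ 2 := by rw [Real.dist_eq, sq_abs]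
  rw [← h]
  exact Finset.single_le_sum (f := fun j => dist (z j) (w j) ^ 2)
    (fun j _ => sq_nonneg _) (Finset.mem_univ i)
lemma dist_eq2 (z w : EuclideanSpace ℝ (Fin 2)) :
    dist z w = Real.sqrt ((z 0 - w 0) ^ 2 + (z 1 - w 1) ^ 2) := by
  rw [EuclideanSpace.dist_eq, Fin.sum_univ_two]
  simp [Real.dist_eq, sq_abs]

lemma seg_mem_closure {t u : ℝ} (ht0 : 0 < t) (ht1 : t < 1) (hu : |u| ≤ t ^ 2) :
    mk2 (2 - t) u ∈ closure Omega1 := by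
  rw [Metric.mem_closure_iff]
  intro ε hε
  set δ : ℝ := min (1/2) (ε / (t ^ 2 + 1)) with hδdef
  have ht2 : (0:ℝ) < t ^ 2 := by positivity
  have hδ0 : 0 < δ := lt_min (by norm_num) (by positivity)
  have hδ1 : δ ≤ 1/2 := min_le_left _ _
  refine ⟨mk2 (2 - t) (u * (1 - δ)), Or.inr ⟨?_, ?_, ?_⟩, ?_⟩
  · rw [mk2_zero]; linarith
  · rw [mk2_zero]; linarith
  · rw [mk2_zero, mk2_one]
    have h1 : |u * (1 - δ)| = |u| * (1 - δ) := by
      rw [abs_mul, abs_of_nonneg (by linarith : (0:ℝ) ≤ 1 - δ)]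
    have h2 : |u| * (1 - δ) ≤ t ^ 2 * (1 - δ) := by
      apply mul_le_mul_of_nonneg_right hu; linarith
    have h3 : t ^ 2 * (1 - δ) < t ^ 2 := by nlinarith
    have : (2 - (2 - t)) ^ 2 = t ^ 2 := by ring
    rw [this, h1]; linarith
  · rw [dist_mk2]
    have : (2 - t - (2 - t)) ^ 2 + (u - u * (1 - δ)) ^ 2 = (u * δ) ^ 2 := by ring
    rw [this, Real.sqrt_sq_eq_abs, abs_mul, abs_of_nonneg hδ0.le]
    have h4 : |u| * δ ≤ t ^ 2 * δ := mul_le_mul_of_nonneg_right hu hδ0.le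
    have h5 : δ ≤ ε / (t ^ 2 + 1) := min_le_right _ _
    have h6 : t ^ 2 * δ ≤ t ^ 2 * (ε / (t ^ 2 + 1)) := mul_le_mul_of_nonneg_left h5 ht2.le
    have h7 : t ^ 2 * (ε / (t ^ 2 + 1)) < ε := by
      rw [mul_div_assoc']
      rw [div_lt_iff₀ (by positivity)]
      nlinarith
    linarith

lemma closure_omega2_y0 {w : EuclideanSpace ℝ (Fin 2)} (hw : w ∈ closure Omega2)
    (h1 : w 1 = 0) : w 0 ≤ 0 := by
  by_contra hc
  push_neg at hc
  rw [Metric.mem_closure_iff] at hw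
  obtain ⟨v, hv, hd⟩ := hw (min (w 0 / 2) ((w 0) ^ 2 / 8)) (by positivity)
  have hd0 : |w 0 - v 0| ≤ dist w v := coord_le_dist w v 0
  have hd1 : |w 1 - v 1| ≤ dist w v := coord_le_dist w v 1
  have he1 : dist w v < w 0 / 2 := lt_of_lt_of_le hd (min_le_left _ _)
  have he2 : dist w v < (w 0) ^ 2 / 8 := lt_of_lt_of_le hd (min_le_right _ _)
  have hv0 : v 0 ≥ w 0 / 2 := by
    have h2 := abs_le.mp (le_of_lt (lt_of_le_of_lt hd0 he1))
    linarith [h2.2]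
  have hv1 : |v 1| < (w 0) ^ 2 / 8 := by
    have h3 : |v 1| = |w 1 - v 1| := by rw [h1, abs_sub_comm, sub_zero]
    rw [h3]; exact lt_of_le_of_lt hd1 he2
  have hsq : v 0 ≤ 1 := le_of_lt hv.1.1.2
  exact hv.2 ⟨by linarith, hsq, by nlinarith⟩

lemma not_closure_square {t u : ℝ} (ht1 : t < 1) :
    mk2 (2 - t) u ∉ closure SquareSet := by
  intro h
  rw [Metric.mem_closure_iff] at h
  obtain ⟨v, hv, hd⟩ := h (1 - t) (by linarith)
  have hd0 : |mk2 (2 - t) u 0 - v 0| ≤ dist (mk2 (2 - t) u) v := coord_le_dist _ v 0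
  rw [mk2_zero] at hd0
  have hv0 : v 0 < 1 := hv.1.2
  have : 1 - t < |2 - t - v 0| := by
    rw [abs_of_pos (by linarith)]; linarith
  linarith

lemma endpoint_frontier {t u : ℝ} (ht0 : 0 < t) (ht1 : t < 1) (hu : |u| = t ^ 2) :
    mk2 (2 - t) u ∈ frontier Omega1 := by
  constructor
  · exact seg_mem_closure ht0 ht1 hu.le
  · intro hmem
    rcases interior_subset hmem with h | h
    · exact absurd h.1.2 (by rw [mk2_zero]; linarith)
    · have := h.2.2
      rw [mk2_zero, mk2_one] at this
      have h2 : (2 - (2 - t)) ^ 2 = t ^ 2 := by ring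
      rw [h2, hu] at this
      exact lt_irrefl _ this

lemma phi_at {t u : ℝ} (ht1 : t < 1) : phiMap (mk2 (2 - t) u) = mk2 t u := by
  rw [phiMap, if_neg]
  · rw [mk2_zero, mk2_one]
    have h2 : 2 - (2 - t) = t := by ring
    rw [h2]
  · intro hc
    exact not_closure_square ht1 (frontier_subset_closure hc.2)
lemma key {t : ℝ} (ht0 : 0 < t) (ht1 : t < 1) (L : ℝ) (hL : 0 ≤ L)
    (h : EuclideanSpace ℝ (Fin 2) → EuclideanSpace ℝ (Fin 2))
    (hrange : ∀ x ∈ closure Omega1, h x ∈ closure Omega2)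
    (hbd : ∀ x ∈ frontier Omega1, h x = phiMap x)
    (hlip : ∀ x ∈ closure Omega1, ∀ y ∈ closure Omega1,
      dist (h x) (h y) ≤ L * dist x y) :
    Real.sqrt (1 + t ^ 2) / t ≤ L := by
  have ht2 : (0:ℝ) < t ^ 2 := by positivity
  set g : ℝ → ℝ := fun u => h (mk2 (2 - t) u) 1 with hgdef
  -- membership of segment points in closure Omega1
  have hmem : ∀ u ∈ Icc (-t ^ 2) (t ^ 2), mk2 (2 - t) u ∈ closure Omega1 := by
    intro u hu
    exact seg_mem_closure ht0 ht1 (abs_le.mpr ⟨hu.1, hu.2⟩)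
  -- continuity of g
  have hgcont : ContinuousOn g (Icc (-t ^ 2) (t ^ 2)) := by
    apply LipschitzOnWith.continuousOn (K := Real.toNNReal L)
    rw [lipschitzOnWith_iff_dist_le_mul]
    intro u hu v hv
    have h1 : dist (g u) (g v) ≤ dist (h (mk2 (2 - t) u)) (h (mk2 (2 - t) v)) := by
      rw [Real.dist_eq]
      exact coord_le_dist _ _ 1
    have h2 := hlip _ (hmem u hu) _ (hmem v hv)
    have h3 : dist (mk2 (2 - t) u) (mk2 (2 - t) v) = dist u v := by
      rw [dist_mk2, Real.dist_eq]
      have : (2 - t - (2 - t)) ^ 2 + (u - v) ^ 2 = (u - v) ^ 2 := by ring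
      rw [this, Real.sqrt_sq_eq_abs]
    rw [Real.coe_toNNReal L hL]
    calc dist (g u) (g v) ≤ L * dist (mk2 (2 - t) u) (mk2 (2 - t) v) := le_trans h1 h2
      _ = L * dist u v := by rw [h3]
  -- endpoint values
  have habs_pos : |(t ^ 2 : ℝ)| = t ^ 2 := abs_of_pos ht2
  have habs_neg : |(-t ^ 2 : ℝ)| = t ^ 2 := by rw [abs_neg]; exact habs_pos
  have hend : ∀ c : ℝ, |c| = t ^ 2 → g c = c := by
    intro c hc
    have hf := endpoint_frontier ht0 ht1 hc
    rw [hgdef]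
    simp only
    rw [hbd _ hf, phi_at ht1, mk2_one]
  -- IVT
  have hivt : (0:ℝ) ∈ g '' Icc (-t ^ 2) (t ^ 2) := by
    apply intermediate_value_Icc (by linarith) hgcont
    rw [hend _ habs_neg, hend _ habs_pos]
    exact ⟨by linarith, by linarith⟩
  obtain ⟨u, humem, hu0⟩ := hivt
  set s := mk2 (2 - t) u with hsdef
  have hscl : s ∈ closure Omega1 := hmem u humem
  have hhs : h s ∈ closure Omega2 := hrange s hscl
  have hhs1 : (h s) 1 = 0 := hu0
  have hhs0 : (h s) 0 ≤ 0 := closure_omega2_y0 hhs hhs1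
  -- choose the endpoint on the same side as u
  obtain ⟨c, hcabs, hcu⟩ : ∃ c : ℝ, |c| = t ^ 2 ∧ |c - u| ≤ t ^ 2 := by
    rcases le_or_gt 0 u with hu | hu
    · exact ⟨t ^ 2, habs_pos, by rw [abs_of_nonneg (by linarith [humem.2])]; linarith⟩
    · refine ⟨-t ^ 2, habs_neg, ?_⟩
      rw [abs_of_nonpos (by linarith [humem.1])]
      linarith [humem.1]
  have hecl : mk2 (2 - t) c ∈ closure Omega1 := seg_mem_closure ht0 ht1 hcabs.le
  have hef : mk2 (2 - t) c ∈ frontier Omega1 := endpoint_frontier ht0 ht1 hcabs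
  have hhe : h (mk2 (2 - t) c) = mk2 t c := by rw [hbd _ hef, phi_at ht1]
  -- lower bound on dist (h e) (h s)
  have hlow : t * Real.sqrt (1 + t ^ 2) ≤ dist (h (mk2 (2 - t) c)) (h s) := by
    rw [hhe, dist_eq2, mk2_zero, mk2_one, hhs1]
    have h1 : t ^ 2 ≤ (t - h s 0) ^ 2 := by nlinarith
    have h2 : (c - 0) ^ 2 = t ^ 2 * t ^ 2 := by
      rw [sub_zero, ← sq_abs, hcabs]; ring
    have h3 : t ^ 2 * (1 + t ^ 2) ≤ (t - h s 0) ^ 2 + (c - 0) ^ 2 := by nlinarith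
    calc t * Real.sqrt (1 + t ^ 2) = Real.sqrt (t ^ 2 * (1 + t ^ 2)) := by
          rw [Real.sqrt_mul (by positivity), Real.sqrt_sq ht0.le]
      _ ≤ _ := Real.sqrt_le_sqrt h3
  -- upper bound on dist e s
  have hup : dist (mk2 (2 - t) c) s ≤ t ^ 2 := by
    rw [hsdef, dist_mk2]
    have : (2 - t - (2 - t)) ^ 2 + (c - u) ^ 2 = (c - u) ^ 2 := by ring
    rw [this, Real.sqrt_sq_eq_abs]
    exact hcu
  have hchain : t * Real.sqrt (1 + t ^ 2) ≤ L * t ^ 2 := by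
    calc t * Real.sqrt (1 + t ^ 2) ≤ dist (h (mk2 (2 - t) c)) (h s) := hlow
      _ ≤ L * dist (mk2 (2 - t) c) s := hlip _ hecl _ hscl
      _ ≤ L * t ^ 2 := mul_le_mul_of_nonneg_left hup hL
  rw [div_le_iff₀ ht0]
  have : t * Real.sqrt (1 + t ^ 2) ≤ t * (L * t) := by
    calc t * Real.sqrt (1 + t ^ 2) ≤ L * t ^ 2 := hchain
      _ = t * (L * t) := by ring
  exact le_of_mul_le_mul_left this ht0


/-- Any Lipschitz map `h : Ω̄₁ → Ω̄₂` extending `phiMap` has Lipschitz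
constant at least `√(1 + t²)/t` for every `t ∈ (0,1)`; in particular `phiMap` admits
no Lipschitz extension. -/
theorem lipschitz_constant_lower_bound :
    (∀ t ∈ Set.Ioo (0:ℝ) 1, ∀ L : ℝ, 0 ≤ L →
      ∀ h : EuclideanSpace ℝ (Fin 2) → EuclideanSpace ℝ (Fin 2),
        (∀ x ∈ closure Omega1, h x ∈ closure Omega2) →
        (∀ x ∈ frontier Omega1, h x = phiMap x) →
        (∀ x ∈ closure Omega1, ∀ y ∈ closure Omega1,
          dist (h x) (h y) ≤ L * dist x y) →
        Real.sqrt (1 + t ^ 2) / t ≤ L) ∧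
    ¬ ∃ (h : EuclideanSpace ℝ (Fin 2) → EuclideanSpace ℝ (Fin 2)) (L : ℝ), 0 ≤ L ∧
        (∀ x ∈ closure Omega1, h x ∈ closure Omega2) ∧
        (∀ x ∈ frontier Omega1, h x = phiMap x) ∧
        (∀ x ∈ closure Omega1, ∀ y ∈ closure Omega1,
          dist (h x) (h y) ≤ L * dist x y) := by
  constructor
  · intro t ht L hL h h1 h2 h3
    exact key ht.1 ht.2 L hL h h1 h2 h3
  · rintro ⟨h, L, hL, h1, h2, h3⟩
    set t : ℝ := 1 / (L + 2) with htdef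
    have hL2 : (0:ℝ) < L + 2 := by linarith
    have ht0 : 0 < t := by positivity
    have ht1 : t < 1 := by
      rw [htdef, div_lt_one hL2]; linarith
    have hb := key ht0 ht1 L hL h h1 h2 h3
    have hs1 : (1:ℝ) ≤ Real.sqrt (1 + t ^ 2) := by
      nlinarith [Real.sq_sqrt (show (0:ℝ) ≤ 1 + t ^ 2 by positivity),
        Real.sqrt_nonneg (1 + t ^ 2), sq_nonneg (Real.sqrt (1 + t ^ 2) - 1), sq_nonneg t]
    have h1t : 1 / t ≤ Real.sqrt (1 + t ^ 2) / t := by gcongr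
    have hinv : 1 / t = L + 2 := by
      rw [htdef, one_div_one_div]
    linarith [hb, h1t, hinv ▸ h1t]
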